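/- Let Q_k(x) = β₀P/((x − w_k)² + H²) for k = 1,…,K with β₀, P, H > 0, and T > 0. Consider the speed-free problem: maximize min_k ∫₀^T Q_k(x(t)) dt over all measurable x : [0,T] → [w₁, w_K]. Its optimal value equals the optimal value of the finite-dimensional problem: maximize min_k Σ_{i} τ_i·Q_k(x̂_i) over finitely many points x̂_i ∈ [w₁, w_K] and durations τ_i ≥ 0 with Σ_i τ_i = T, where at most K + 1 points suffice. -/

import Mathlib

open MeasureTheory Set

lemma aux_sum_ite (n i : ℕ) :
    ∑ j ∈ Finset.range n, (if j < i then (1:ℕ) else 0) = min i n := by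
  induction n with
  | zero => simp
  | succ n ih =>
    rw [Finset.sum_range_succ, ih]
    rcases lt_or_ge n i with h | h
    · simp [h]; omega
    · simp [Nat.not_lt.2 h]; omega

lemma aux_integrableOn {f : ℝ → ℝ} (hf : Measurable f) {M : ℝ}
    (hM : ∀ t, |f t| ≤ M) (a b : ℝ) : IntegrableOn f (Ioc a b) volume := by
  haveI : Fact (volume (Ioc a b) < ⊤) := ⟨measure_Ioc_lt_top⟩
  exact Integrable.mono' (integrable_const M) hf.aestronglyMeasurable
    (Filter.Eventually.of_forall fun t => by simpa using hM t)

lemma aux_intervalIntegrable {f : ℝ → ℝ} (hf : Measurable f) {M : ℝ}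
    (hM : ∀ t, |f t| ≤ M) (a b : ℝ) : IntervalIntegrable f volume a b :=
  ⟨aux_integrableOn hf hM a b, aux_integrableOn hf hM b a⟩

lemma aux_step (K : ℕ) (T : ℝ) (Q : Fin (K+1) → ℝ → ℝ)
    (hQc : ∀ k, Continuous (Q k)) (M : ℝ) (hQb : ∀ k s, |Q k s| ≤ M)
    (lo hi : ℝ) (hlohi : lo ≤ hi)
    (xhat : Fin (K+2) → ℝ) (τ : Fin (K+2) → ℝ)
    (hxh : ∀ i, xhat i ∈ Icc lo hi) (hτ : ∀ i, 0 ≤ τ i) (hsum : ∑ i, τ i = T) :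
    ∃ x : ℝ → ℝ, Measurable x ∧ (∀ t, x t ∈ Icc lo hi) ∧
      ∀ k, (∫ t in (0:ℝ)..T, Q k (x t)) = ∑ i, τ i * Q k (xhat i) := by
  classical
  set τ' : ℕ → ℝ := fun n => if h : n < K+2 then τ ⟨n, h⟩ else 0 with hτ'
  set xh' : ℕ → ℝ := fun n => if h : n < K+2 then xhat ⟨n, h⟩ else lo with hxh'
  have hτ'0 : ∀ n, 0 ≤ τ' n := by
    intro n; by_cases h : n < K+2 <;> simp [hτ', h, hτ]
  have hxh'I : ∀ n, xh' n ∈ Icc lo hi := by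
    intro n; by_cases h : n < K+2
    · simpa [hxh', h] using hxh ⟨n, h⟩
    · simp [hxh', h, hlohi]
  set a : ℕ → ℝ := fun n => ∑ j ∈ Finset.range n, τ' j with ha
  have hamono : Monotone a := by
    intro m n hmn
    exact Finset.sum_le_sum_of_subset_of_nonneg (Finset.range_subset_range.2 hmn)
      (fun j _ _ => hτ'0 j)
  have ha0 : a 0 = 0 := by simp [ha]
  have haT : a (K+2) = T := by
    show ∑ j ∈ Finset.range (K+2), τ' j = T
    rw [← Fin.sum_univ_eq_sum_range τ' (K+2), ← hsum]
    exact Finset.sum_congr rfl fun i _ => by simp [hτ']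
  set idx : ℝ → ℕ := fun t => ∑ i ∈ Finset.range (K+1), if a (i+1) ≤ t then 1 else 0
    with hidx
  have hidxlt : ∀ t, idx t < K+2 := by
    intro t
    have : idx t ≤ ∑ _i ∈ Finset.range (K+1), 1 :=
      Finset.sum_le_sum (fun i _ => by split <;> omega)
    exact Nat.lt_succ_of_le (by simpa using this : idx t ≤ K + 1)
  set x : ℝ → ℝ := fun t => xh' (idx t) with hx
  have hxmeas : Measurable x := by
    apply Measurable.comp' (measurable_from_top)
    apply Finset.measurable_sum
    intro i _
    exact Measurable.ite (by exact measurableSet_Ici) measurable_const measurable_const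
  have hxI : ∀ t, x t ∈ Icc lo hi := fun t => hxh'I _
  have hconst : ∀ i < K + 2, ∀ t ∈ Ioo (a i) (a (i+1)), x t = xh' i := by
    intro i hi t ht
    have hidxeq : idx t = i := by
      have : ∀ j ∈ Finset.range (K+1),
          (if a (j+1) ≤ t then (1:ℕ) else 0) = if j < i then 1 else 0 := by
        intro j _
        rcases lt_or_ge j i with hj | hj
        · rw [if_pos ((hamono hj).trans_lt ht.1).le, if_pos hj]
        · rw [if_neg (not_le.2 (ht.2.trans_le (hamono (by omega)))), if_neg (by omega)]
      rw [hidx]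
      simp only []
      rw [Finset.sum_congr rfl this, aux_sum_ite]
      omega
    rw [hx]; simp only []; rw [hidxeq]
  refine ⟨x, hxmeas, hxI, fun k => ?_⟩
  have hint : ∀ i, IntervalIntegrable (fun t => Q k (x t)) volume (a i) (a (i+1)) :=
    fun i => aux_intervalIntegrable ((hQc k).measurable.comp hxmeas)
      (fun t => hQb k (x t)) _ _
  have hpiece : ∀ i < K + 2,
      (∫ t in (a i)..(a (i+1)), Q k (x t)) = τ' i * Q k (xh' i) := by
    intro i hi
    have hle : a i ≤ a (i+1) := hamono (Nat.le_succ i)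
    have hstep : a (i+1) - a i = τ' i := by
      rw [ha]; simp [Finset.sum_range_succ]
    rw [intervalIntegral.integral_of_le hle, integral_Ioc_eq_integral_Ioo,
      setIntegral_congr_fun measurableSet_Ioo
        (fun t ht => by simp only []; rw [hconst i hi t ht] :
          EqOn (fun t => Q k (x t)) (fun _ => Q k (xh' i)) _),
      setIntegral_const, Real.volume_real_Ioo_of_le hle, hstep,
      smul_eq_mul]
  have hsumint := intervalIntegral.sum_integral_adjacent_intervals
    (a := a) (n := K+2) (fun i _ => hint i)
  rw [ha0, haT] at hsumint
  rw [← hsumint, Finset.sum_congr rfl (fun i hi => hpiece i (Finset.mem_range.1 hi)),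
    ← Fin.sum_univ_eq_sum_range (fun i => τ' i * Q k (xh' i)) (K+2)]
  exact Finset.sum_congr rfl fun i _ => by simp [hτ', hxh']

lemma aux_sum_fin_dite {n m : ℕ} (hm : m ≤ n) (g : Fin m → ℝ) :
    ∑ i : Fin n, (if h : (i:ℕ) < m then g ⟨i, h⟩ else 0) = ∑ j : Fin m, g j := by
  have h1 : ∑ i : Fin n, (if h : (i:ℕ) < m then g ⟨i, h⟩ else 0)
      = ∑ i ∈ Finset.range n, (if h : i < m then g ⟨i, h⟩ else 0) :=
    Fin.sum_univ_eq_sum_range (fun i => if h : i < m then g ⟨i, h⟩ else 0) n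
  rw [h1, ← Finset.sum_subset (Finset.range_subset_range.2 hm)
    (fun x _ hx => dif_neg (by simpa using hx))]
  rw [← Fin.sum_univ_eq_sum_range (fun i => if h : i < m then g ⟨i, h⟩ else 0) m]
  exact Finset.sum_congr rfl (fun i _ => by rw [dif_pos i.isLt])

lemma aux_cara (K : ℕ) (T : ℝ) (hT : 0 < T) (Q : Fin (K+1) → ℝ → ℝ)
    (hQc : ∀ k, Continuous (Q k)) (M : ℝ) (hQb : ∀ k s, |Q k s| ≤ M)
    (lo hi : ℝ) (hlohi : lo ≤ hi)
    (x : ℝ → ℝ) (hxm : Measurable x) (hxI : ∀ t, x t ∈ Icc lo hi)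
    (ε : ℝ) (hε : 0 < ε) :
    ∃ xhat τ : Fin (K+2) → ℝ, (∀ i, xhat i ∈ Icc lo hi) ∧ (∀ i, 0 ≤ τ i) ∧
      (∑ i, τ i = T) ∧
      ∀ k, (∫ t in (0:ℝ)..T, Q k (x t)) ≤ (∑ i, τ i * Q k (xhat i)) + T * ε := by
  classical
  have hM0 : 0 ≤ M := le_trans (abs_nonneg _) (hQb 0 lo)
  set f : ℝ → (Fin (K+1) → ℝ) := fun s k => Q k s with hf
  have hfc : Continuous f := continuous_pi fun k => hQc k
  set C : Set (Fin (K+1) → ℝ) := f '' Icc lo hi with hC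
  set g : ℝ → (Fin (K+1) → ℝ) := fun t => f (x t) with hg
  have hgm : Measurable g := hfc.measurable.comp hxm
  haveI : Fact (volume (Ioc (0:ℝ) T) < ⊤) := ⟨measure_Ioc_lt_top⟩
  have hfi : IntegrableOn g (Ioc (0:ℝ) T) volume := by
    refine Integrable.mono' (integrable_const M) hgm.aestronglyMeasurable
      (Filter.Eventually.of_forall fun t => ?_)
    exact (pi_norm_le_iff_of_nonneg hM0).2 fun k => by
      simpa using hQb k (x t)
  have h0 : volume (Ioc (0:ℝ) T) ≠ 0 := by
    simp only [Real.volume_Ioc, ne_eq, ENNReal.ofReal_eq_zero, not_le]; linarith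
  set p : Fin (K+1) → ℝ := ⨍ t in Ioc (0:ℝ) T, g t with hp
  have hpD : p ∈ closure (convexHull ℝ C) := by
    refine Convex.set_average_mem ((convex_convexHull ℝ C).closure) isClosed_closure
      h0 measure_Ioc_lt_top.ne
      (Filter.Eventually.of_forall fun t => ?_) hfi
    exact subset_closure (subset_convexHull ℝ C ⟨x t, hxI t, rfl⟩)
  have hTtoReal : (volume (Ioc (0:ℝ) T)).toReal = T := by
    simp [Real.volume_Ioc, ENNReal.toReal_ofReal hT.le]
  have hpk : ∀ k, T * p k = ∫ t in (0:ℝ)..T, Q k (x t) := by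
    intro k
    have hv : (∫ t in Ioc (0:ℝ) T, g t) k = ∫ t in Ioc (0:ℝ) T, Q k (x t) := by
      have := (ContinuousLinearMap.proj (R := ℝ) (φ := fun _ : Fin (K+1) => ℝ)
        k).integral_comp_comm hfi
      exact this.symm
    rw [hp, setAverage_eq, Pi.smul_apply, smul_eq_mul, hv, measureReal_def, hTtoReal,
      intervalIntegral.integral_of_le hT.le]
    field_simp
  obtain ⟨q, hqC, hdist⟩ := Metric.mem_closure_iff.1 hpD ε hε
  obtain ⟨ι, hι, z, wt, hzC, hindep, hwtpos, hwtsum, hzq⟩ :=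
    eq_pos_convex_span_of_mem_convexHull hqC
  letI := hι
  have hwtsum' : ∑ i : ι, wt i = 1 := hwtsum
  have hzq' : ∑ i : ι, wt i • z i = q := hzq
  set m := Fintype.card ι with hmdef
  have hm : m ≤ K + 2 := by
    have h1 := hindep.card_le_finrank_succ
    have h2 : Module.finrank ℝ (vectorSpan ℝ (Set.range z)) ≤
        Module.finrank ℝ (Fin (K+1) → ℝ) := Submodule.finrank_le _
    rw [Module.finrank_pi, Fintype.card_fin] at h2
    omega
  set e : Fin m ≃ ι := (Fintype.equivFin ι).symm with he
  choose s hsI hsf using fun j : Fin m => hzC (Set.mem_range_self (e j))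
  set xhat : Fin (K+2) → ℝ := fun i => if h : (i:ℕ) < m then s ⟨i, h⟩ else lo
    with hxhat
  set τ : Fin (K+2) → ℝ := fun i => if h : (i:ℕ) < m then T * wt (e ⟨i, h⟩) else 0
    with hτ
  have hxhI : ∀ i, xhat i ∈ Icc lo hi := by
    intro i; rw [hxhat]; dsimp only; split
    · exact hsI _
    · exact ⟨le_refl _, hlohi⟩
  have hτ0 : ∀ i, 0 ≤ τ i := by
    intro i; rw [hτ]; dsimp only; split
    · exact mul_nonneg hT.le (hwtpos _).le
    · exact le_refl _
  have hτsum : ∑ i, τ i = T := by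
    rw [hτ]
    rw [aux_sum_fin_dite hm (fun j => T * wt (e j)), ← Finset.mul_sum,
      Equiv.sum_comp e wt, hwtsum', mul_one]
  have hQeq : ∀ k, ∑ i, τ i * Q k (xhat i) = T * q k := by
    intro k
    have hterm : ∀ i : Fin (K+2), τ i * Q k (xhat i)
        = (if h : (i:ℕ) < m then T * (wt (e ⟨i, h⟩) * Q k (s ⟨i, h⟩)) else 0) := by
      intro i; rw [hτ, hxhat]; dsimp only; split
      · ring
      · ring
    rw [Finset.sum_congr rfl (fun i _ => hterm i),
      aux_sum_fin_dite hm (fun j => T * (wt (e j) * Q k (s j))), ← Finset.mul_sum]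
    congr 1
    have hz : ∀ j : Fin m, Q k (s j) = z (e j) k := by
      intro j
      have := congrFun (hsf j) k
      exact this
    rw [Finset.sum_congr rfl (fun j _ => by rw [hz j]),
      Equiv.sum_comp e (fun i => wt i * z i k)]
    calc ∑ i : ι, wt i * z i k = (∑ i : ι, wt i • z i) k := by
          rw [Finset.sum_apply]
          exact Finset.sum_congr rfl fun i _ => by simp
      _ = q k := by rw [hzq']
  refine ⟨xhat, τ, hxhI, hτ0, hτsum, fun k => ?_⟩
  rw [hQeq k, ← hpk k]
  have h1 : dist (p k) (q k) ≤ dist p q := dist_le_pi_dist p q k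
  rw [Real.dist_eq] at h1
  have h2 : p k - q k ≤ ε := by
    have := abs_le.1 (h1.trans hdist.le)
    linarith [this.2]
  nlinarith

theorem stmt16 (K : ℕ) (β₀ P H T : ℝ) (hβ : 0 < β₀) (hP : 0 < P) (hH : 0 < H)
    (hT : 0 < T) (w : Fin (K + 1) → ℝ) (hw : Monotone w)
    (Q : Fin (K + 1) → ℝ → ℝ)
    (hQ : Q = fun k x => β₀ * P / ((x - w k) ^ 2 + H ^ 2)) :
    sSup {E : ℝ | ∃ x : ℝ → ℝ, Measurable x ∧
        (∀ t, x t ∈ Set.Icc (w 0) (w (Fin.last K))) ∧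
        E = ⨅ k, ∫ t in (0:ℝ)..T, Q k (x t)} =
    sSup {E : ℝ | ∃ xhat : Fin (K + 2) → ℝ, ∃ τ : Fin (K + 2) → ℝ,
        (∀ i, xhat i ∈ Set.Icc (w 0) (w (Fin.last K))) ∧
        (∀ i, 0 ≤ τ i) ∧ (∑ i, τ i = T) ∧
        E = ⨅ k, ∑ i, τ i * Q k (xhat i)} := by
  classical
  set lo := w 0 with hlo
  set hi := w (Fin.last K) with hhi
  have hlohi : lo ≤ hi := hw (Fin.zero_le _)
  have hQc : ∀ k, Continuous (Q k) := by
    intro k; rw [hQ]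
    exact Continuous.div continuous_const (by continuity) (fun x => by positivity)
  set M : ℝ := β₀ * P / H ^ 2 with hM
  have hM0 : 0 < M := by positivity
  have hQpos : ∀ k s, 0 < Q k s := by intro k s; rw [hQ]; positivity
  have hQle : ∀ k s, Q k s ≤ M := by
    intro k s; rw [hQ, hM]
    apply div_le_div_of_nonneg_left (by positivity) (by positivity)
    nlinarith [sq_nonneg (s - w k)]
  have hQb : ∀ k s, |Q k s| ≤ M := fun k s =>
    abs_le.2 ⟨by linarith [hQpos k s], hQle k s⟩
  set A := {E : ℝ | ∃ x : ℝ → ℝ, Measurable x ∧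
      (∀ t, x t ∈ Set.Icc lo hi) ∧
      E = ⨅ k, ∫ t in (0:ℝ)..T, Q k (x t)} with hA
  set B := {E : ℝ | ∃ xhat : Fin (K + 2) → ℝ, ∃ τ : Fin (K + 2) → ℝ,
      (∀ i, xhat i ∈ Set.Icc lo hi) ∧
      (∀ i, 0 ≤ τ i) ∧ (∑ i, τ i = T) ∧
      E = ⨅ k, ∑ i, τ i * Q k (xhat i)} with hB
  have hAbdd : BddAbove A := by
    refine ⟨T * M, fun E hE => ?_⟩
    obtain ⟨x, hxm, hxI, rfl⟩ := hE
    refine le_trans (ciInf_le (Finite.bddBelow_range _) 0) ?_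
    have h1 : (∫ t in (0:ℝ)..T, Q 0 (x t)) ≤ ∫ t in (0:ℝ)..T, M :=
      intervalIntegral.integral_mono_on hT.le
        (aux_intervalIntegrable ((hQc 0).measurable.comp hxm) (fun t => hQb 0 (x t)) 0 T)
        intervalIntegrable_const (fun t _ => hQle 0 (x t))
    rwa [intervalIntegral.integral_const, smul_eq_mul, sub_zero] at h1
  have hBbdd : BddAbove B := by
    refine ⟨T * M, fun E hE => ?_⟩
    obtain ⟨xhat, τ, hxh, hτ, hsum, rfl⟩ := hE
    refine le_trans (ciInf_le (Finite.bddBelow_range _) 0) ?_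
    calc ∑ i, τ i * Q 0 (xhat i) ≤ ∑ i, τ i * M :=
          Finset.sum_le_sum fun i _ => mul_le_mul_of_nonneg_left (hQle 0 _) (hτ i)
      _ = T * M := by rw [← Finset.sum_mul, hsum]
  have hAne : A.Nonempty := by
    refine ⟨_, fun _ => lo, measurable_const, fun t => ⟨le_refl _, hlohi⟩, rfl⟩
  have hBne : B.Nonempty := by
    refine ⟨_, fun _ => lo, fun _ => T / (K + 2), fun i => ⟨le_refl _, hlohi⟩,
      fun i => by positivity, ?_, rfl⟩
    rw [Finset.sum_const, Finset.card_univ, Fintype.card_fin, nsmul_eq_mul]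
    push_cast
    field_simp
  apply le_antisymm
  · refine csSup_le hAne fun E hE => ?_
    obtain ⟨x, hxm, hxI, rfl⟩ := hE
    refine le_of_forall_pos_le_add fun ε hε => ?_
    obtain ⟨xhat, τ, hxh, hτ, hsum, hineq⟩ :=
      aux_cara K T hT Q hQc M hQb lo hi hlohi x hxm hxI (ε / T) (by positivity)
    have hTε : T * (ε / T) = ε := by field_simp
    have hb : (⨅ k, ∑ i, τ i * Q k (xhat i)) ∈ B := ⟨xhat, τ, hxh, hτ, hsum, rfl⟩
    have h2 : (⨅ k, ∫ t in (0:ℝ)..T, Q k (x t)) - ε ≤ ⨅ k, ∑ i, τ i * Q k (xhat i) := by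
      refine le_ciInf fun k => ?_
      have h3 := hineq k
      rw [hTε] at h3
      have h4 : (⨅ k, ∫ t in (0:ℝ)..T, Q k (x t)) ≤ ∫ t in (0:ℝ)..T, Q k (x t) :=
        ciInf_le (Finite.bddBelow_range _) k
      linarith
    have h5 : (⨅ k, ∑ i, τ i * Q k (xhat i)) ≤ sSup B := le_csSup hBbdd hb
    linarith
  · refine csSup_le hBne fun E hE => ?_
    obtain ⟨xhat, τ, hxh, hτ, hsum, rfl⟩ := hE
    obtain ⟨x, hxm, hxI, hkeq⟩ := aux_step K T Q hQc M hQb lo hi hlohi xhat τ hxh hτ hsum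
    refine le_csSup hAbdd ⟨x, hxm, hxI, ?_⟩
    exact (iInf_congr hkeq).symm
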